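/- arXiv:1309.5170 — 2 statements merged into one kernel-verified Lean document; each statement's English description precedes it below -/
import Mathlib

section
/- For s ∈ ℕ, a > 0 and T > a^s, the volume I(s,T,a) of P(s,T,a) := {x ∈ [0,∞)^s : ∏_{j=1}^s(x_j+a) ≤ T} satisfies T(ln T − s ln a)^s / ((s−1)!(ln T + s(1 − ln a))) < I(s,T,a) < T(ln T − s ln a)^s / ((s−1)!(ln T + s(1 − ln a) − 1)). -/
open MeasureTheory

/-- The corner smooth hyperbolic cross `P(s,T,a) = {x ∈ [0,∞)^s : ∏ (x_j + a) ≤ T}`. -/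
def hcP (s : ℕ) (T a : ℝ) : Set (Fin s → ℝ) :=
  {x | (∀ i, 0 ≤ x i) ∧ ∏ i, (x i + a) ≤ T}

open Set intervalIntegral Real


noncomputable def Phi (n : ℕ) (L : ℝ) : ℝ := ∫ t in (0:ℝ)..L, Real.exp t * t ^ n

lemma contPhiInt (n : ℕ) : Continuous fun t : ℝ => Real.exp t * t ^ n := by continuity

lemma Phi_continuous (n : ℕ) : Continuous (Phi n) :=
  intervalIntegral.continuous_primitive (fun a b => ((contPhiInt n).intervalIntegrable a b)) 0

lemma Phi_hasDerivAt (n : ℕ) (L : ℝ) : HasDerivAt (Phi n) (Real.exp L * L ^ n) L :=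
  intervalIntegral.integral_hasDerivAt_right ((contPhiInt n).intervalIntegrable 0 L)
    ((contPhiInt n).stronglyMeasurableAtFilter _ _) (contPhiInt n).continuousAt

lemma Phi_zero_eq (L : ℝ) : Phi 0 L = Real.exp L - 1 := by
  simp [Phi, integral_exp]

lemma Phi_zero' (n : ℕ) : Phi n 0 = 0 := intervalIntegral.integral_same

lemma Phi_nonneg (n : ℕ) {L : ℝ} (hL : 0 ≤ L) : 0 ≤ Phi n L :=
  intervalIntegral.integral_nonneg hL (fun x hx => mul_nonneg (Real.exp_nonneg x) (pow_nonneg hx.1 n))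

lemma Phi_succ (n : ℕ) (L : ℝ) :
    Phi (n + 1) L = Real.exp L * L ^ (n + 1) - (n + 1) * Phi n L := by
  have h : ∀ x ∈ Set.uIcc (0:ℝ) L, HasDerivAt (fun t : ℝ => t ^ (n+1))
      (((n:ℝ)+1) * x ^ n) x := by
    intro x _
    simpa using hasDerivAt_pow (n+1) x
  have h2 : ∀ x ∈ Set.uIcc (0:ℝ) L, HasDerivAt Real.exp (Real.exp x) x :=
    fun x _ => Real.hasDerivAt_exp x
  have hparts := intervalIntegral.integral_mul_deriv_eq_deriv_mul h h2
    (by apply Continuous.intervalIntegrable; continuity)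
    (by apply Continuous.intervalIntegrable; continuity)
  have : Phi (n+1) L = ∫ x in (0:ℝ)..L, x ^ (n+1) * Real.exp x := by
    unfold Phi; congr 1; ext x; ring
  rw [this, hparts]
  have : (∫ x in (0:ℝ)..L, ((n:ℝ)+1) * x ^ n * Real.exp x)
      = ((n:ℝ)+1) * Phi n L := by
    rw [show (fun x : ℝ => ((n:ℝ)+1) * x ^ n * Real.exp x)
      = (fun x : ℝ => ((n:ℝ)+1) * (Real.exp x * x ^ n)) from by ext x; ring]
    rw [intervalIntegral.integral_const_mul]; rfl
  simp only [this]
  simp [zero_pow (Nat.succ_ne_zero n)]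
  ring

lemma Phi_lower (n : ℕ) {L : ℝ} (hL : 0 < L) :
    Real.exp L * L ^ (n + 1) / (L + n + 1) < Phi n L := by
  set G : ℝ → ℝ := fun t => Phi n t - Real.exp t * t ^ (n+1) / (t + n + 1) with hGdef
  have hden : ∀ t : ℝ, 0 ≤ t → t + (n:ℝ) + 1 ≠ 0 := fun t ht => by positivity
  have hG : ∀ t : ℝ, 0 ≤ t →
      HasDerivAt G (Real.exp t * t ^ (n+1) / (t + n + 1) ^ 2) t := by
    intro t ht
    have hd : HasDerivAt (fun t : ℝ => Real.exp t * t ^ (n+1) / (t + n + 1))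
        (((Real.exp t * t ^ (n+1) + Real.exp t * (((n:ℝ)+1) * t ^ n)) * (t + n + 1)
          - Real.exp t * t ^ (n+1) * 1) / (t + n + 1) ^ 2) t := by
      have hnum : HasDerivAt (fun t : ℝ => Real.exp t * t ^ (n+1))
          (Real.exp t * t ^ (n+1) + Real.exp t * (((n:ℝ)+1) * t ^ n)) t := by
        exact (Real.hasDerivAt_exp t).mul (by simpa using hasDerivAt_pow (n+1) t)
      have hdd : HasDerivAt (fun t : ℝ => t + (n:ℝ) + 1) 1 t := by
        simpa [add_assoc] using ((hasDerivAt_id t).add_const ((n:ℝ)+1))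
      exact hnum.div hdd (hden t ht)
    have := (Phi_hasDerivAt n t).sub hd
    refine this.congr_deriv ?_
    have := hden t ht
    field_simp
    ring
  have hmono : StrictMonoOn G (Set.Icc 0 L) := by
    apply strictMonoOn_of_deriv_pos (convex_Icc 0 L)
    · apply ContinuousOn.sub (Phi_continuous n).continuousOn
      apply ContinuousOn.div (by fun_prop) (by fun_prop)
      intro t ht
      exact hden t ht.1
    · intro t ht
      rw [interior_Icc] at ht
      rw [(hG t ht.1.le).deriv]
      refine div_pos (mul_pos (Real.exp_pos t) (pow_pos ht.1 _)) (pow_pos ?_ 2)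
      have := Nat.cast_nonneg (α := ℝ) n
      linarith [ht.1]
  have h0 : G 0 = 0 := by
    simp [hGdef, Phi_zero']
  have := hmono (Set.left_mem_Icc.2 hL.le) (Set.right_mem_Icc.2 hL.le) hL
  rw [h0] at this
  have : 0 < G L := this
  simp only [hGdef] at this
  linarith [this]

lemma Phi_upper (n : ℕ) {L : ℝ} (hL : 0 < L) :
    Phi n L < Real.exp L * L ^ (n + 1) / (L + n) := by
  rcases Nat.eq_zero_or_pos n with hn | hn
  · subst hn
    rw [Phi_zero_eq]
    have : Real.exp L * L ^ 1 / (L + 0) = Real.exp L := by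
      rw [add_zero, pow_one, mul_div_assoc, div_self hL.ne', mul_one]
    push_cast
    rw [this]
    linarith
  · have hnpos : (0:ℝ) < n := by exact_mod_cast hn
    set H : ℝ → ℝ := fun t => Real.exp t * t ^ (n+1) / (t + n) - Phi n t with hHdef
    have hden : ∀ t : ℝ, 0 ≤ t → t + (n:ℝ) ≠ 0 := fun t ht => by positivity
    have hH : ∀ t : ℝ, 0 ≤ t →
        HasDerivAt H ((n:ℝ) * (Real.exp t * t ^ n) / (t + n) ^ 2) t := by
      intro t ht
      have hnum : HasDerivAt (fun t : ℝ => Real.exp t * t ^ (n+1))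
          (Real.exp t * t ^ (n+1) + Real.exp t * (((n:ℝ)+1) * t ^ n)) t := by
        exact (Real.hasDerivAt_exp t).mul (by simpa using hasDerivAt_pow (n+1) t)
      have hdd : HasDerivAt (fun t : ℝ => t + (n:ℝ)) 1 t := by
        simpa using ((hasDerivAt_id t).add_const ((n:ℝ)))
      have hd := (hnum.div hdd (hden t ht)).sub (Phi_hasDerivAt n t)
      refine hd.congr_deriv ?_
      have := hden t ht
      field_simp
      ring
    have hmono : StrictMonoOn H (Set.Icc 0 L) := by
      apply strictMonoOn_of_deriv_pos (convex_Icc 0 L)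
      · apply ContinuousOn.sub _ (Phi_continuous n).continuousOn
        apply ContinuousOn.div (by fun_prop) (by fun_prop)
        intro t ht
        exact hden t ht.1
      · intro t ht
        rw [interior_Icc] at ht
        rw [(hH t ht.1.le).deriv]
        refine div_pos (mul_pos hnpos (mul_pos (Real.exp_pos t) (pow_pos ht.1 n)))
          (pow_pos ?_ 2)
        linarith [ht.1]
    have h0 : H 0 = 0 := by
      simp [hHdef, Phi_zero', zero_pow (Nat.succ_ne_zero n)]
    have := hmono (Set.left_mem_Icc.2 hL.le) (Set.right_mem_Icc.2 hL.le) hL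
    rw [h0] at this
    simp only [hHdef] at this
    linarith [this]


lemma measurableSet_hcP (s : ℕ) (T a : ℝ) : MeasurableSet (hcP s T a) := by
  have : hcP s T a = (⋂ i, (fun x : Fin s → ℝ => x i) ⁻¹' (Ici 0)) ∩
      ((fun x : Fin s → ℝ => ∏ i, (x i + a)) ⁻¹' (Iic T)) := by
    ext x; simp [hcP]
  rw [this]
  refine MeasurableSet.inter (MeasurableSet.iInter fun i => ?_) ?_
  · exact measurableSet_Ici.preimage (measurable_pi_apply i)
  · refine measurableSet_Iic.preimage ?_
    exact Finset.measurable_prod _ fun i _ => by fun_prop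

lemma hcP_eq_empty {s : ℕ} {T a : ℝ} (ha : 0 < a) (h : T < a ^ s) : hcP s T a = ∅ := by
  ext x
  simp only [hcP, mem_setOf_eq, mem_empty_iff_false, iff_false, not_and]
  intro hx
  have : a ^ s ≤ ∏ i, (x i + a) := by
    rw [show a ^ s = ∏ _i : Fin s, a from by simp]
    exact Finset.prod_le_prod (fun i _ => ha.le) (fun i _ => by linarith [hx i])
  linarith

lemma slice_nonneg {s : ℕ} {T a y : ℝ} (ha : 0 < a) (hy : 0 ≤ y) :
    {z : Fin s → ℝ | Fin.cons y z ∈ hcP (s+1) T a} = hcP s (T / (y + a)) a := by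
  have hya : 0 < y + a := by linarith
  ext z
  simp only [hcP, mem_setOf_eq, Fin.forall_fin_succ, Fin.cons_zero, Fin.cons_succ,
    Fin.prod_univ_succ]
  constructor
  · rintro ⟨⟨-, h1⟩, h2⟩
    refine ⟨h1, ?_⟩
    rw [le_div_iff₀ hya, mul_comm]
    exact h2
  · rintro ⟨h1, h2⟩
    refine ⟨⟨hy, h1⟩, ?_⟩
    rw [le_div_iff₀ hya, mul_comm] at h2
    exact h2

lemma slice_neg {s : ℕ} {T a y : ℝ} (hy : y < 0) :
    {z : Fin s → ℝ | Fin.cons y z ∈ hcP (s+1) T a} = ∅ := by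
  ext z
  simp only [hcP, mem_setOf_eq, mem_empty_iff_false, iff_false, not_and, Fin.forall_fin_succ,
    Fin.cons_zero]
  rintro ⟨h0, -⟩
  linarith

lemma volume_hcP_succ (s : ℕ) (T a : ℝ) :
    volume (hcP (s+1) T a) =
      ∫⁻ y : ℝ, volume {z : Fin s → ℝ | Fin.cons y z ∈ hcP (s+1) T a} := by
  have hme := (volume_preserving_piFinSuccAbove (fun _ : Fin (s+1) => ℝ) 0).symm
  set e := (MeasurableEquiv.piFinSuccAbove (fun _ : Fin (s+1) => ℝ) 0)
  rw [← hme.measure_preimage_equiv (hcP (s+1) T a)]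
  rw [Measure.volume_eq_prod, Measure.prod_apply ((measurableSet_hcP (s+1) T a).preimage e.symm.measurable)]
  congr 1
  ext y
  congr 1
  ext z
  simp only [mem_preimage, Set.mem_setOf_eq]
  have : e.symm (y, z) = Fin.cons y z := by
    show (Fin.insertNthEquiv (fun _ : Fin (s+1) => ℝ) 0) (y, z) = Fin.cons y z
    simp [Fin.insertNthEquiv, Fin.insertNth_zero']
  rw [this]

lemma key_integral (n : ℕ) (a T : ℝ) (ha : 0 < a) (hT : a ^ (n+2) ≤ T) :
    ∫ y in (0:ℝ)..(T / a^(n+1) - a), Phi n (Real.log (T / (y + a) / a ^ (n+1)))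
      = a * (Real.exp (Real.log (T / a^(n+2))) * (Real.log (T / a^(n+2)))^(n+1) / (n+1)
          - Phi n (Real.log (T / a^(n+2)))) := by
  set L := Real.log (T / a^(n+2)) with hLdef
  have hTpos : 0 < T := lt_of_lt_of_le (by positivity) hT
  have hLnn : 0 ≤ L := Real.log_nonneg ((one_le_div (by positivity)).2 hT)
  have hexpL : Real.exp L = T / a^(n+2) := Real.exp_log (by positivity)
  set g : ℝ → ℝ := fun y => Phi n (Real.log (T / (y + a) / a ^ (n+1))) with hgdef
  -- substitution y = a * exp v - a
  have hf : ∀ x ∈ Set.uIcc (0:ℝ) L, HasDerivAt (fun v => a * Real.exp v - a)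
      (a * Real.exp x) x := by
    intro x _
    simpa using ((Real.hasDerivAt_exp x).const_mul a).sub_const a
  have hgcont : ContinuousOn g ((fun v => a * Real.exp v - a) '' Set.uIcc (0:ℝ) L) := by
    rintro y ⟨v, hv, rfl⟩
    rw [Set.uIcc_of_le hLnn] at hv
    have h1 : (0:ℝ) ≤ a * Real.exp v - a := by
      have := Real.one_le_exp hv.1
      nlinarith
    set y := a * Real.exp v - a
    have hya : 0 < y + a := by linarith
    apply ContinuousAt.continuousWithinAt
    apply (Phi_continuous n).continuousAt.comp
    have hpos : 0 < T / (y + a) / a ^ (n+1) := by positivity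
    have hc1 : ContinuousAt (fun y : ℝ => T / (y + a) / a ^ (n+1)) y := by
      apply ContinuousAt.div _ continuousAt_const (by positivity)
      exact continuousAt_const.div (continuousAt_id.add continuousAt_const) hya.ne'
    exact hc1.log hpos.ne'
  have hsub := intervalIntegral.integral_comp_smul_deriv' hf (by fun_prop) hgcont
  have hf0 : a * Real.exp (0:ℝ) - a = 0 := by simp
  have hfL : a * Real.exp L - a = T / a^(n+1) - a := by
    rw [hexpL]
    congr 1
    field_simp
    ring
  rw [hf0, hfL] at hsub
  rw [← hsub]
  -- simplify the integrand
  have hpt : ∀ x : ℝ, (a * Real.exp x) • ((g ∘ fun v => a * Real.exp v - a) x)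
      = a * ((fun r => Real.exp (L - r) * Phi n r) (L - x)) := by
    intro x
    have h1 : a * Real.exp x - a + a = a * Real.exp x := by ring
    have h2 : T / (a * Real.exp x) / a ^ (n+1) = T / a^(n+2) * Real.exp (-x) := by
      rw [Real.exp_neg]
      field_simp
      ring
    have h3 : Real.log (T / (a * Real.exp x) / a ^ (n+1)) = L - x := by
      rw [h2, Real.log_mul (show (0:ℝ) < T / a ^ (n+2) by positivity).ne'
        (Real.exp_ne_zero _), Real.log_exp, hLdef]
      ring
    simp only [Function.comp_apply, hgdef, smul_eq_mul, h1, h3, sub_sub_cancel]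
    ring
  rw [intervalIntegral.integral_congr (fun x _ => hpt x)]
  rw [intervalIntegral.integral_const_mul]
  congr 1
  -- reflect
  rw [intervalIntegral.integral_comp_sub_left (fun r => Real.exp (L - r) * Phi n r) L]
  simp only [sub_self, sub_zero]
  -- integration by parts
  have hu : ∀ x ∈ Set.uIcc (0:ℝ) L, HasDerivAt (Phi n) (Real.exp x * x ^ n) x :=
    fun x _ => Phi_hasDerivAt n x
  have hv : ∀ x ∈ Set.uIcc (0:ℝ) L, HasDerivAt (fun r => -Real.exp (L - r))
      (Real.exp (L - x)) x := by
    intro x _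
    have h1 : HasDerivAt (fun r : ℝ => L - r) (-1) x := by
      simpa using (hasDerivAt_id x).const_sub L
    have := ((Real.hasDerivAt_exp (L - x)).comp x h1).neg
    rw [show Real.exp (L - x) = -(Real.exp (L - x) * -1) by ring]
    exact this
  have hparts := intervalIntegral.integral_mul_deriv_eq_deriv_mul hu hv
    ((contPhiInt n).intervalIntegrable 0 L)
    (Continuous.intervalIntegrable (by fun_prop) 0 L)
  rw [intervalIntegral.integral_congr
    (fun x _ => mul_comm (Real.exp (L - x)) (Phi n x)), hparts]
  have hlast : ∀ x : ℝ, Real.exp x * x ^ n * -Real.exp (L - x) = -(Real.exp L * x ^ n) := by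
    intro x
    have : Real.exp x * Real.exp (L - x) = Real.exp L := by
      rw [← Real.exp_add]
      congr 1
      ring
    rw [← this]
    ring
  rw [intervalIntegral.integral_congr (fun x _ => hlast x)]
  rw [intervalIntegral.integral_neg, intervalIntegral.integral_const_mul, integral_pow]
  simp [Phi_zero', Real.exp_zero, zero_pow (Nat.succ_ne_zero n)]
  push_cast
  ring

lemma volume_hcP_formula (n : ℕ) (a : ℝ) (ha : 0 < a) :
    ∀ T : ℝ, a ^ (n+1) ≤ T →
    volume (hcP (n+1) T a) =
      ENNReal.ofReal (a ^ (n+1) / (Nat.factorial n : ℝ) *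
        Phi n (Real.log (T / a ^ (n+1)))) := by
  induction n with
  | zero =>
    intro T hT
    have ha1 : a ≤ T := by simpa using hT
    have hTpos : 0 < T := lt_of_lt_of_le ha ha1
    have hset : hcP 1 T a = Set.pi Set.univ (fun _ : Fin 1 => Icc (0:ℝ) (T - a)) := by
      ext x
      simp only [hcP, mem_setOf_eq, Fin.prod_univ_one, Set.mem_pi, Set.mem_univ,
        forall_true_left, mem_Icc, Fin.forall_fin_one]
      constructor
      · rintro ⟨h0, h1⟩; exact ⟨h0, by linarith⟩
      · rintro ⟨h0, h1⟩; exact ⟨h0, by linarith⟩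
    rw [hset, volume_pi_pi]
    simp only [Real.volume_Icc, Finset.prod_const, Finset.card_univ, Fintype.card_fin, pow_one]
    rw [Phi_zero_eq, pow_one, Real.exp_log (by positivity)]
    congr 1
    simp only [Nat.factorial_zero, Nat.cast_one, div_one]
    field_simp
    ring
  | succ n IH =>
    intro T hT
    have hTpos : 0 < T := lt_of_lt_of_le (by positivity) hT
    set X : ℝ := T / a ^ (n+1) - a with hXdef
    have hXnonneg : 0 ≤ X := by
      rw [hXdef, sub_nonneg, le_div_iff₀ (by positivity)]
      calc a * a ^ (n+1) = a ^ (n+2) := by ring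
      _ ≤ T := hT
    set c : ℝ := a ^ (n+1) / (Nat.factorial n : ℝ) with hcdef
    have hcpos : 0 < c := by positivity
    have harg : ∀ y ∈ Icc (0:ℝ) X, a ^ (n+1) ≤ T / (y + a) := by
      intro y hy
      have hya : 0 < y + a := by linarith [hy.1]
      rw [le_div_iff₀ hya]
      have h2 : y + a ≤ T / a ^ (n+1) := by
        have := hy.2
        rw [hXdef] at this
        linarith
      have h3 : a ^ (n+1) * (y + a) ≤ a ^ (n+1) * (T / a ^ (n+1)) :=
        mul_le_mul_of_nonneg_left h2 (by positivity)
      rwa [mul_div_cancel₀ T (by positivity : (a:ℝ) ^ (n+1) ≠ 0)] at h3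
    have hslice : ∀ y : ℝ,
        volume {z : Fin (n+1) → ℝ | Fin.cons y z ∈ hcP (n+1+1) T a}
        = Set.indicator (Icc 0 X)
            (fun y => ENNReal.ofReal (c * Phi n (Real.log (T / (y + a) / a ^ (n+1))))) y := by
      intro y
      by_cases hy : y ∈ Icc (0:ℝ) X
      · rw [Set.indicator_of_mem hy, slice_nonneg ha hy.1, IH (T / (y + a)) (harg y hy)]
      · rw [Set.indicator_of_notMem hy]
        rcases lt_or_ge y 0 with h0 | h0
        · rw [slice_neg h0]; simp
        · have hyX : X < y := by
            by_contra h
            push_neg at h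
            exact hy ⟨h0, h⟩
          rw [slice_nonneg ha h0, hcP_eq_empty ha ?_]
          · simp
          · have hya : 0 < y + a := by linarith
            rw [div_lt_iff₀ hya]
            have h2 : T / a ^ (n+1) < y + a := by
              rw [hXdef] at hyX
              linarith
            calc T = a ^ (n+1) * (T / a ^ (n+1)) := by
                  rw [mul_div_cancel₀ T (by positivity : (a:ℝ) ^ (n+1) ≠ 0)]
            _ < a ^ (n+1) * (y + a) := by
                  exact mul_lt_mul_of_pos_left h2 (by positivity)
    rw [volume_hcP_succ (n+1) T a, lintegral_congr hslice,
      lintegral_indicator measurableSet_Icc]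
    have hfcont : ContinuousOn
        (fun y => c * Phi n (Real.log (T / (y + a) / a ^ (n+1)))) (Icc 0 X) := by
      apply ContinuousOn.mul continuousOn_const
      intro y hy
      have hya : 0 < y + a := by linarith [hy.1]
      apply ContinuousAt.continuousWithinAt
      apply (Phi_continuous n).continuousAt.comp
      have hpos : 0 < T / (y + a) / a ^ (n+1) := by positivity
      have hc1 : ContinuousAt (fun y : ℝ => T / (y + a) / a ^ (n+1)) y := by
        apply ContinuousAt.div _ continuousAt_const (by positivity)
        exact continuousAt_const.div (continuousAt_id.add continuousAt_const) hya.ne'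
      exact hc1.log hpos.ne'
    have hint : IntegrableOn
        (fun y => c * Phi n (Real.log (T / (y + a) / a ^ (n+1)))) (Icc 0 X) :=
      hfcont.integrableOn_Icc
    have hnn : 0 ≤ᵐ[volume.restrict (Icc 0 X)]
        (fun y => c * Phi n (Real.log (T / (y + a) / a ^ (n+1)))) := by
      refine (ae_restrict_iff' measurableSet_Icc).2 (Filter.Eventually.of_forall ?_)
      intro y hy
      show (0:ℝ) ≤ _
      have hya : 0 < y + a := by linarith [hy.1]
      have h1 : (1:ℝ) ≤ T / (y + a) / a ^ (n+1) := by
        rw [le_div_iff₀ (by positivity : (0:ℝ) < a ^ (n+1)), one_mul]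
        exact harg y hy
      exact mul_nonneg hcpos.le (Phi_nonneg n (Real.log_nonneg h1))
    rw [← MeasureTheory.ofReal_integral_eq_lintegral_ofReal hint hnn]
    congr 1
    rw [MeasureTheory.integral_Icc_eq_integral_Ioc,
      ← intervalIntegral.integral_of_le hXnonneg,
      intervalIntegral.integral_const_mul, hXdef, key_integral n a T ha hT]
    rw [Phi_succ n (Real.log (T / a ^ (n+2)))]
    have h2 : T / a ^ (n + 1 + 1) = T / a ^ (n+2) := by norm_num
    rw [h2]
    have hfact : (Nat.factorial (n+1) : ℝ) = (n+1) * (Nat.factorial n : ℝ) := by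
      rw [Nat.factorial_succ]
      push_cast
      ring
    rw [hcdef, hfact]
    have hne1 : (Nat.factorial n : ℝ) ≠ 0 := by positivity
    have hne2 : ((n:ℝ) + 1) ≠ 0 := by positivity
    field_simp
    ring

/-- for `s ∈ ℕ`, `a > 0` and `T > a^s`, with `I(s,T,a)` the volume of
`P(s,T,a)`:
`T(ln T − s ln a)^s / ((s−1)!(ln T + s(1 − ln a))) < I(s,T,a)
  < T(ln T − s ln a)^s / ((s−1)!(ln T + s(1 − ln a) − 1))`. -/
theorem volume_hcP_bounds (s : ℕ) (hs : 1 ≤ s) (a T : ℝ) (ha : 0 < a)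
    (hT : a ^ s < T) :
    T * (Real.log T - s * Real.log a) ^ s /
        ((Nat.factorial (s - 1) : ℝ) * (Real.log T + s * (1 - Real.log a))) <
      (volume (hcP s T a)).toReal ∧
    (volume (hcP s T a)).toReal <
      T * (Real.log T - s * Real.log a) ^ s /
        ((Nat.factorial (s - 1) : ℝ) * (Real.log T + s * (1 - Real.log a) - 1)) := by
  obtain ⟨n, rfl⟩ : ∃ n, s = n + 1 := ⟨s - 1, (Nat.succ_pred_eq_of_pos hs).symm⟩
  have hTpos : 0 < T := lt_trans (by positivity) hT
  have hf := volume_hcP_formula n a ha T hT.le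
  set L := Real.log (T / a ^ (n+1)) with hLdef
  have hLpos : 0 < L := Real.log_pos ((one_lt_div (by positivity)).2 hT)
  have hexp : Real.exp L = T / a ^ (n+1) := Real.exp_log (by positivity)
  have hane : (a:ℝ) ^ (n+1) ≠ 0 := by positivity
  have hTe : T = a ^ (n+1) * Real.exp L := by
    rw [hexp]
    exact (mul_div_cancel₀ T hane).symm
  have hfact_pos : (0:ℝ) < (Nat.factorial n : ℝ) := by
    exact_mod_cast Nat.factorial_pos n
  have hn0 : (0:ℝ) ≤ (n:ℝ) := Nat.cast_nonneg n
  have hvol : (volume (hcP (n+1) T a)).toReal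
      = a ^ (n+1) / (Nat.factorial n : ℝ) * Phi n L := by
    rw [hf, ENNReal.toReal_ofReal
      (mul_nonneg (by positivity) (Phi_nonneg n hLpos.le))]
  have hlog : Real.log T - ((n+1 : ℕ) : ℝ) * Real.log a = L := by
    rw [hLdef, Real.log_div hTpos.ne' hane, Real.log_pow]
    try push_cast
    try ring
  have hden1 : Real.log T + ((n+1 : ℕ) : ℝ) * (1 - Real.log a) = L + (n:ℝ) + 1 := by
    rw [← hlog]
    push_cast
    ring
  have hden2 : Real.log T + ((n+1 : ℕ) : ℝ) * (1 - Real.log a) - 1 = L + (n:ℝ) := by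
    rw [← hlog]
    push_cast
    ring
  have hcc : (0:ℝ) < a ^ (n+1) / (Nat.factorial n : ℝ) :=
    div_pos (by positivity) hfact_pos
  simp only [Nat.add_sub_cancel]
  rw [hvol, hden2, hden1, hlog]
  constructor
  · have key := Phi_lower n hLpos
    have h1 : (0:ℝ) < L + (n:ℝ) + 1 := by linarith
    have heq : T * L ^ (n+1) / ((Nat.factorial n : ℝ) * (L + (n:ℝ) + 1))
        = a ^ (n+1) / (Nat.factorial n : ℝ)
          * (Real.exp L * L ^ (n+1) / (L + (n:ℝ) + 1)) := by
      rw [hTe]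
      field_simp
    rw [heq]
    exact mul_lt_mul_of_pos_left key hcc
  · have key := Phi_upper n hLpos
    have h1 : (0:ℝ) < L + (n:ℝ) := by linarith
    have heq : T * L ^ (n+1) / ((Nat.factorial n : ℝ) * (L + (n:ℝ)))
        = a ^ (n+1) / (Nat.factorial n : ℝ)
          * (Real.exp L * L ^ (n+1) / (L + (n:ℝ))) := by
      rw [hTe]
      field_simp
    rw [heq]
    exact mul_lt_mul_of_pos_left key hcc
end

section
/- For every s ∈ ℕ, T > 0 and a > 0, the cardinality of the corner hyperbolic cross admits the dimension-by-dimension decomposition |Γ(s,T,a)| = ∑_{j=0}^{s} C(s,j) · |Γ(j, T·a^{j−s}, a+1)|, where Γ(s,T,a) := {k ∈ ℕ₀^s : ∏_{i=1}^s (k_i + a) ≤ T}, C(s,j) is the binomial coefficient, and by convention |Γ(0,T',a')| := 1 if T' ≥ 1 appropriately (here the j = 0 term counts the zero vector, contributing 1 when a^s ≤ T and 0 otherwise). -/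
/-- The corner hyperbolic cross `Γ(s,T,a) = {k ∈ ℕ₀^s : ∏ (k_i + a) ≤ T}`. -/
def hcGamma (s : ℕ) (T a : ℝ) : Set (Fin s → ℕ) :=
  {k | ∏ i, ((k i : ℝ) + a) ≤ T}


-- finiteness
lemma hcGamma_finite (s : ℕ) (T a : ℝ) (ha : 0 < a) : (hcGamma s T a).Finite := by
  classical
  have h : hcGamma s T a ⊆ Set.pi Set.univ (fun _ : Fin s => Set.Iic (⌊T / a ^ (s-1)⌋₊)) := by
    intro k hk i _
    simp only [Set.mem_Iic]
    have hk' : ∏ l, ((k l : ℝ) + a) ≤ T := hk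
    have h1 : ((k i : ℝ) + a) * a ^ (s - 1) ≤ ∏ l, ((k l : ℝ) + a) := by
      rw [← Finset.mul_prod_erase Finset.univ _ (Finset.mem_univ i)]
      have hc : (Finset.univ.erase i).card = s - 1 := by
        rw [Finset.card_erase_of_mem (Finset.mem_univ i), Finset.card_univ, Fintype.card_fin]
      calc ((k i : ℝ) + a) * a ^ (s - 1)
          = ((k i : ℝ) + a) * ∏ _l ∈ Finset.univ.erase i, a := by
            rw [Finset.prod_const, hc]
        _ ≤ ((k i : ℝ) + a) * ∏ l ∈ Finset.univ.erase i, ((k l : ℝ) + a) := by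
            apply mul_le_mul_of_nonneg_left _ (by positivity)
            apply Finset.prod_le_prod (fun _ _ => le_of_lt ha)
            intro l _
            have : (0:ℝ) ≤ (k l : ℝ) := Nat.cast_nonneg _
            linarith
    have h2 : (k i : ℝ) ≤ T / a ^ (s - 1) := by
      rw [le_div_iff₀ (by positivity)]
      have h0 : (0:ℝ) ≤ (k i : ℝ) := Nat.cast_nonneg _
      nlinarith [pow_pos ha (s-1)]
    exact Nat.le_floor h2
  exact (Set.Finite.pi (fun _ => Set.finite_Iic _)).subset h

/-- The support class of `S` inside `Γ(s,T,a)`. -/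
def suppClass (s : ℕ) (T a : ℝ) (S : Finset (Fin s)) : Set (Fin s → ℕ) :=
  {k | k ∈ hcGamma s T a ∧ ∀ i, k i ≠ 0 ↔ i ∈ S}

lemma suppClass_ncard (s : ℕ) (T a : ℝ) (ha : 0 < a) (S : Finset (Fin s)) :
    (suppClass s T a S).ncard
      = (hcGamma S.card (T * a ^ ((S.card : ℝ) - (s : ℝ))) (a + 1)).ncard := by
  classical
  set j := S.card with hj
  have hjs : j ≤ s := by simpa [hj] using Finset.card_le_univ S
  set ec : {x // x ∈ S} ≃ Fin j := S.equivFin with hec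
  set f : (Fin j → ℕ) → (Fin s → ℕ) :=
    fun m i => if h : i ∈ S then m (ec ⟨i, h⟩) + 1 else 0 with hf
  have hfinj : Function.Injective f := by
    intro m m' hmm
    funext p
    have := congrFun hmm ((ec.symm p) : Fin s)
    rcases (ec.symm p).2 with hp
    simp only [hf, dif_pos ((ec.symm p).2)] at this
    have he : (⟨((ec.symm p) : Fin s), (ec.symm p).2⟩ : {x // x ∈ S}) = ec.symm p := rfl
    rw [he, ec.apply_symm_apply] at this
    omega
  -- key product identity
  have hprod : ∀ m : Fin j → ℕ,
      ∏ i, ((f m i : ℝ) + a) = (∏ p, ((m p : ℝ) + (a + 1))) * a ^ (s - j) := by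
    intro m
    rw [← Finset.prod_mul_prod_compl S]
    congr 1
    · rw [← Finset.prod_coe_sort S (fun i => ((f m i : ℝ) + a))]
      apply Fintype.prod_equiv ec
      intro i
      simp only [hf, dif_pos i.2]
      have he : (⟨(i : Fin s), i.2⟩ : {x // x ∈ S}) = i := rfl
      rw [he]
      push_cast; ring
    · have : ∀ i ∈ Sᶜ, ((f m i : ℝ) + a) = a := by
        intro i hi
        simp only [hf, dif_neg (Finset.mem_compl.mp hi)]
        simp
      rw [Finset.prod_congr rfl this, Finset.prod_const, Finset.card_compl,
        Fintype.card_fin]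
  -- rpow rewriting
  have hT' : T * a ^ ((j : ℝ) - (s : ℝ)) = T / a ^ (s - j) := by
    rw [Real.rpow_sub ha, Real.rpow_natCast, Real.rpow_natCast]
    rw [eq_div_iff (by positivity)]
    rw [mul_assoc, div_mul_eq_mul_div, ← pow_add]
    rw [Nat.add_sub_cancel' hjs]
    field_simp
  have himg : f '' (hcGamma j (T * a ^ ((j : ℝ) - (s : ℝ))) (a + 1)) = suppClass s T a S := by
    ext k
    constructor
    · rintro ⟨m, hm, rfl⟩
      refine ⟨?_, ?_⟩
      · show ∏ i, ((f m i : ℝ) + a) ≤ T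
        rw [hprod m]
        have hm' : ∏ p, ((m p : ℝ) + (a + 1)) ≤ T * a ^ ((j : ℝ) - (s : ℝ)) := hm
        rw [hT', le_div_iff₀ (by positivity)] at hm'
        exact hm'
      · intro i
        by_cases h : i ∈ S <;> simp [hf, h]
    · rintro ⟨hk, hsupp⟩
      refine ⟨fun p => k ((ec.symm p) : Fin s) - 1, ?_, ?_⟩
      · show ∏ p, (((k ((ec.symm p) : Fin s) - 1 : ℕ) : ℝ) + (a + 1)) ≤ _
        have hfk : f (fun p => k ((ec.symm p) : Fin s) - 1) = k := by
          funext i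
          by_cases h : i ∈ S
          · simp only [hf, dif_pos h]
            have := (hsupp i).mpr h
            have he : ec.symm (ec ⟨i, h⟩) = ⟨i, h⟩ := ec.symm_apply_apply _
            rw [he]
            show k i - 1 + 1 = k i
            omega
          · simp only [hf, dif_neg h]
            have := (hsupp i).not.mpr h
            omega
        have := hprod (fun p => k ((ec.symm p) : Fin s) - 1)
        rw [hfk] at this
        have hk' : ∏ i, ((k i : ℝ) + a) ≤ T := hk
        rw [this] at hk'
        rw [hT', le_div_iff₀ (by positivity)]
        exact hk'
      · funext i
        by_cases h : i ∈ S
        · simp only [hf, dif_pos h]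
          have := (hsupp i).mpr h
          have he : ec.symm (ec ⟨i, h⟩) = ⟨i, h⟩ := ec.symm_apply_apply _
          rw [he]
          show k i - 1 + 1 = k i
          omega
        · simp only [hf, dif_neg h]
          have := (hsupp i).not.mpr h
          omega
  rw [← himg, Set.ncard_image_of_injective _ hfinj]

/-- dimension-by-dimension decomposition
`|Γ(s,T,a)| = ∑_{j=0}^{s} C(s,j) · |Γ(j, T·a^{j−s}, a+1)|`.
(For `j = 0` the set `Γ(0, T a^{-s}, a+1)` consists of the empty tuple precisely when
`a^s ≤ T`, contributing `1` in that case and `0` otherwise.) -/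
theorem hcGamma_card_decomposition (s : ℕ) (hs : 1 ≤ s) (T a : ℝ) (hT : 0 < T)
    (ha : 0 < a) :
    (hcGamma s T a).ncard =
      ∑ j ∈ Finset.range (s + 1),
        Nat.choose s j * (hcGamma j (T * a ^ ((j : ℝ) - (s : ℝ))) (a + 1)).ncard := by
  classical
  have hfin := hcGamma_finite s T a ha
  have hclassfin : ∀ S : Finset (Fin s), (suppClass s T a S).Finite :=
    fun S => hfin.subset (fun k hk => hk.1)
  -- Γ = biUnion of classes
  have hcover : hfin.toFinset
      = Finset.univ.biUnion (fun S : Finset (Fin s) => (hclassfin S).toFinset) := by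
    ext k
    simp only [Set.Finite.mem_toFinset, Finset.mem_biUnion, Finset.mem_univ, true_and]
    constructor
    · intro hk
      exact ⟨Finset.univ.filter (fun i => k i ≠ 0), hk, fun i => by simp⟩
    · rintro ⟨S, hS⟩
      exact hS.1
  have hdisj : ∀ S ∈ (Finset.univ : Finset (Finset (Fin s))), ∀ S' ∈ (Finset.univ : Finset (Finset (Fin s))),
      S ≠ S' → Disjoint ((hclassfin S).toFinset) ((hclassfin S').toFinset) := by
    intro S _ S' _ hne
    rw [Finset.disjoint_left]
    intro k hk hk'
    apply hne
    rw [Set.Finite.mem_toFinset] at hk hk'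
    ext i
    rw [← hk.2 i, hk'.2 i]
  have hcard : (hcGamma s T a).ncard = ∑ S : Finset (Fin s), (suppClass s T a S).ncard := by
    rw [Set.ncard_eq_toFinset_card _ hfin, hcover, Finset.card_biUnion hdisj]
    exact Finset.sum_congr rfl (fun S _ =>
      (Set.ncard_eq_toFinset_card _ (hclassfin S)).symm)
  rw [hcard]
  have hstep : ∀ S : Finset (Fin s), (suppClass s T a S).ncard
      = (fun j => (hcGamma j (T * a ^ ((j : ℝ) - (s : ℝ))) (a + 1)).ncard) S.card :=
    fun S => suppClass_ncard s T a ha S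
  calc ∑ S : Finset (Fin s), (suppClass s T a S).ncard
      = ∑ S ∈ (Finset.univ : Finset (Fin s)).powerset,
          (fun j => (hcGamma j (T * a ^ ((j : ℝ) - (s : ℝ))) (a + 1)).ncard) S.card := by
        rw [Finset.powerset_univ]
        exact Finset.sum_congr rfl (fun S _ => hstep S)
    _ = ∑ j ∈ Finset.range (s + 1), ∑ S ∈ Finset.powersetCard j Finset.univ,
          (fun j => (hcGamma j (T * a ^ ((j : ℝ) - (s : ℝ))) (a + 1)).ncard) S.card := by
        rw [Finset.sum_powerset, Finset.card_univ, Fintype.card_fin]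
    _ = ∑ j ∈ Finset.range (s + 1),
          Nat.choose s j * (hcGamma j (T * a ^ ((j : ℝ) - (s : ℝ))) (a + 1)).ncard := by
        apply Finset.sum_congr rfl
        intro j hj
        have := Finset.sum_powersetCard j (Finset.univ : Finset (Fin s))
          (fun n => (hcGamma n (T * a ^ ((n : ℝ) - (s : ℝ))) (a + 1)).ncard)
        simpa [Finset.card_univ, mul_comm] using this
end
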